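/- For every k ∈ {0,…,T}, the Riccati solutions satisfy the Loewner-order bounds Π̂_k ⪰ Π_k ⪰ Π̌_k ⪰ 0, where Π is the Riccati solution associated with the covariances Σ_{ρ_0},…,Σ_{ρ_{T−1}}, Π̌ is the standard LQR Riccati solution, and Π̂_k = A_kᵀ ⋯ A_{T−1}ᵀ F A_{T−1} ⋯ A_k. -/

import Mathlib

open Matrix Filter Topology

/-- The unique symmetric positive semidefinite square root of a positive
semidefinite real matrix (junk value `0` if the matrix is not PSD). -/
noncomputable def msqrt {d : ℕ} (X : Matrix (Fin d) (Fin d) ℝ) :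
    Matrix (Fin d) (Fin d) ℝ :=
  letI := Classical.propDecidable X.PosSemidef
  if h : X.PosSemidef then
    h.1.eigenvectorUnitary.1 * diagonal ((↑) ∘ Real.sqrt ∘ h.1.eigenvalues) *
      (star h.1.eigenvectorUnitary : Matrix (Fin d) (Fin d) ℝ)
  else 0

/-- The Frobenius norm of a real square matrix. -/
noncomputable def frob {d : ℕ} (X : Matrix (Fin d) (Fin d) ℝ) : ℝ :=
  Real.sqrt (∑ i, ∑ j, X i j ^ 2)

/-- Data of the mutual information optimal control problem for a discrete-time
linear system `x_{k+1} = A_k x_k + B_k u_k + w_k`. -/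
structure LQData (n m : ℕ) where
  ε : ℝ
  A : ℕ → Matrix (Fin n) (Fin n) ℝ
  B : ℕ → Matrix (Fin n) (Fin m) ℝ
  R : ℕ → Matrix (Fin m) (Fin m) ℝ
  F : Matrix (Fin n) (Fin n) ℝ
  Sw : ℕ → Matrix (Fin n) (Fin n) ℝ
  Sini : Matrix (Fin n) (Fin n) ℝ

namespace LQData

variable {n m : ℕ} (P : LQData n m) (T : ℕ) (Srho : ℕ → Matrix (Fin m) (Fin m) ℝ)

/-- The backward Riccati recursion `Π_k` associated with the prior covariances
`Σ_{ρ_k}`: `Π_T = F` and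
`Π_k = A_kᵀ Π_{k+1} A_k − (1/ε) A_kᵀ Π_{k+1} B_k Σ^{1/2} (I + Σ^{1/2} C_k Σ^{1/2})⁻¹ Σ^{1/2} B_kᵀ Π_{k+1} A_k`
with `C_k = (R_k + B_kᵀ Π_{k+1} B_k)/ε`. -/
noncomputable def Ric (k : ℕ) : Matrix (Fin n) (Fin n) ℝ :=
  if h : T ≤ k then P.F
  else
    let Pk := Ric (k + 1)
    let S := msqrt (Srho k)
    let C := (1 / P.ε) • (P.R k + (P.B k)ᵀ * Pk * P.B k)
    (P.A k)ᵀ * Pk * P.A k -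
      (1 / P.ε) • ((P.A k)ᵀ * Pk * P.B k * S * (1 + S * C * S)⁻¹ * S * (P.B k)ᵀ * Pk * P.A k)
termination_by T - k
decreasing_by omega

/-- `C_k = (R_k + B_kᵀ Π_{k+1} B_k)/ε`. -/
noncomputable def Ck (k : ℕ) : Matrix (Fin m) (Fin m) ℝ :=
  (1 / P.ε) • (P.R k + (P.B k)ᵀ * P.Ric T Srho (k + 1) * P.B k)

/-- `Σ_{Q_k} = ε (R_k + B_kᵀ Π_{k+1} B_k)⁻¹`. -/
noncomputable def SigQ (k : ℕ) : Matrix (Fin m) (Fin m) ℝ :=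
  P.ε • (P.R k + (P.B k)ᵀ * P.Ric T Srho (k + 1) * P.B k)⁻¹

/-- Covariance `Σ_{π_k}` of the optimal policy for the fixed prior. -/
noncomputable def SigPi (k : ℕ) : Matrix (Fin m) (Fin m) ℝ :=
  msqrt (Srho k) * (1 + msqrt (Srho k) * P.Ck T Srho k * msqrt (Srho k))⁻¹ * msqrt (Srho k)

/-- Feedback gain `P_k = −(1/ε) Σ_{π_k} B_kᵀ Π_{k+1} A_k`. -/
noncomputable def Pgain (k : ℕ) : Matrix (Fin m) (Fin n) ℝ :=
  -((1 / P.ε) • (P.SigPi T Srho k * (P.B k)ᵀ * P.Ric T Srho (k + 1) * P.A k))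

/-- Forward state covariance recursion under the optimal policy. -/
noncomputable def Sigx : ℕ → Matrix (Fin n) (Fin n) ℝ
  | 0 => P.Sini
  | k + 1 =>
    (P.A k + P.B k * P.Pgain T Srho k) * Sigx k *
        (P.A k + P.B k * P.Pgain T Srho k)ᵀ +
      P.B k * P.SigPi T Srho k * (P.B k)ᵀ + P.Sw k

/-- The standard LQR Riccati recursion `Π̌_k`. -/
noncomputable def RicLQR (k : ℕ) : Matrix (Fin n) (Fin n) ℝ :=
  if h : T ≤ k then P.F
  else
    let Pk := RicLQR (k + 1)
    (P.A k)ᵀ * Pk * P.A k -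
      (P.A k)ᵀ * Pk * P.B k * (P.R k + (P.B k)ᵀ * Pk * P.B k)⁻¹ * (P.B k)ᵀ * Pk * P.A k
termination_by T - k
decreasing_by omega

/-- `Π̂_k = A_kᵀ ⋯ A_{T−1}ᵀ F A_{T−1} ⋯ A_k`. -/
noncomputable def RicHat (k : ℕ) : Matrix (Fin n) (Fin n) ℝ :=
  if h : T ≤ k then P.F
  else (P.A k)ᵀ * RicHat (k + 1) * P.A k
termination_by T - k
decreasing_by omega

/-- `Σ_{w_{k−1}}` with the convention `Σ_{w_{−1}} := Σ_{x_ini}`. -/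
noncomputable def Swm1 (k : ℕ) : Matrix (Fin n) (Fin n) ℝ :=
  if k = 0 then P.Sini else P.Sw (k - 1)

/-- The matrix `M̌_k` from the sufficient condition for stochastic optimal policies. -/
noncomputable def Mcheck (k : ℕ) : Matrix (Fin m) (Fin m) ℝ :=
  (P.R k + (P.B k)ᵀ * P.RicHat T (k + 1) * P.B k)⁻¹ *
      ((P.B k)ᵀ * P.RicLQR T (k + 1) * P.A k * P.Swm1 k * (P.A k)ᵀ *
        P.RicLQR T (k + 1) * P.B k) *
      (P.R k + (P.B k)ᵀ * P.RicHat T (k + 1) * P.B k)⁻¹ -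
    P.ε • (P.R k + (P.B k)ᵀ * P.RicLQR T (k + 1) * P.B k)⁻¹

/-- State covariance under the zero control input. -/
noncomputable def SigxZero : ℕ → Matrix (Fin n) (Fin n) ℝ
  | 0 => P.Sini
  | k + 1 => P.A k * SigxZero k * (P.A k)ᵀ + P.Sw k

/-- The matrix `M̂_k^zero` from the sufficient condition for deterministic optimal policies. -/
noncomputable def MhatZero (k : ℕ) : Matrix (Fin m) (Fin m) ℝ :=
  (P.R k + (P.B k)ᵀ * P.RicLQR T (k + 1) * P.B k)⁻¹ *
      ((P.B k)ᵀ * P.RicHat T (k + 1) * P.A k * P.SigxZero k * (P.A k)ᵀ *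
        P.RicHat T (k + 1) * P.B k) *
      (P.R k + (P.B k)ᵀ * P.RicLQR T (k + 1) * P.B k)⁻¹ -
    P.ε • (P.R k + (P.B k)ᵀ * P.RicHat T (k + 1) * P.B k)⁻¹


/-- The backward recursion `r_k` for the mean offset:
`r_T = 0` and `r_k = A_k⁻¹ r_{k+1} − Π_k⁻¹ A_kᵀ Π_{k+1} B_k (I + Σ_{ρ_k} C_k)⁻¹ μ_{ρ_k}`. -/
noncomputable def rvec (μ : ℕ → Fin m → ℝ) (k : ℕ) : Fin n → ℝ :=
  if h : T ≤ k then 0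
  else
    ((P.A k)⁻¹).mulVec (rvec μ (k + 1)) -
      ((P.Ric T Srho k)⁻¹ * ((P.A k)ᵀ * P.Ric T Srho (k + 1) * P.B k *
        (1 + Srho k * P.Ck T Srho k)⁻¹)).mulVec (μ k)
termination_by T - k
decreasing_by omega

/-- `Θ_k = ε C_k − ε C_k Σ_{π_k} C_k − (I − C_k Σ_{π_k}) B_kᵀ Π_{k+1} A_k Π_k⁻¹ A_kᵀ Π_{k+1} B_k (I − Σ_{π_k} C_k)`. -/
noncomputable def Theta (k : ℕ) : Matrix (Fin m) (Fin m) ℝ :=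
  P.ε • P.Ck T Srho k - P.ε • (P.Ck T Srho k * P.SigPi T Srho k * P.Ck T Srho k) -
    (1 - P.Ck T Srho k * P.SigPi T Srho k) *
      ((P.B k)ᵀ * P.Ric T Srho (k + 1) * P.A k * (P.Ric T Srho k)⁻¹ *
        ((P.A k)ᵀ * P.Ric T Srho (k + 1) * P.B k)) *
      (1 - P.SigPi T Srho k * P.Ck T Srho k)

end LQData

/-- Extend a `T`-tuple of matrices to a function on `ℕ` (by zero). -/
def extT {m : ℕ} (T : ℕ) (σ : Fin T → Matrix (Fin m) (Fin m) ℝ) :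
    ℕ → Matrix (Fin m) (Fin m) ℝ :=
  fun k => if h : k < T then σ ⟨k, h⟩ else 0


/-- Extend a `T`-tuple of vectors to a function on `ℕ` (by zero). -/
def extV {m : ℕ} (T : ℕ) (μ : Fin T → Fin m → ℝ) : ℕ → Fin m → ℝ :=
  fun k => if h : k < T then μ ⟨k, h⟩ else 0

namespace LQData

variable {n m : ℕ} (P : LQData n m) (T : ℕ)

/-- The reduced objective `J̌` as a function of the `T`-tuple of prior covariances. -/
noncomputable def Jcheck (σ : Fin T → Matrix (Fin m) (Fin m) ℝ) : ℝ :=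
  (1 / 2) * ((P.Ric T (extT T σ) 0 * P.Sini).trace +
    ∑ k : Fin T,
      (P.ε * Real.log ((extT T σ k + P.SigQ T (extT T σ) k).det / (P.SigQ T (extT T σ) k).det) +
        (P.Ric T (extT T σ) (k + 1) * P.Sw k).trace))

/-- `L_k = (Σ_{Q_k} + Σ_{ρ_k})⁻¹`. -/
noncomputable def Lmat (Srho : ℕ → Matrix (Fin m) (Fin m) ℝ) (k : ℕ) :
    Matrix (Fin m) (Fin m) ℝ :=
  (P.SigQ T Srho k + Srho k)⁻¹

/-- `E_k = (1/ε) Σ_{Q_k} B_kᵀ Π_{k+1} A_k`. -/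
noncomputable def Emat (Srho : ℕ → Matrix (Fin m) (Fin m) ℝ) (k : ℕ) :
    Matrix (Fin m) (Fin n) ℝ :=
  (1 / P.ε) • (P.SigQ T Srho k * (P.B k)ᵀ * P.Ric T Srho (k + 1) * P.A k)

/-- `J̌'_k = (ε/2) L_k (Σ_{ρ_k} + Σ_{Q_k} − E_k Σ_{x_k} E_kᵀ) L_k`. -/
noncomputable def Jprime (Srho : ℕ → Matrix (Fin m) (Fin m) ℝ) (k : ℕ) :
    Matrix (Fin m) (Fin m) ℝ :=
  (P.ε / 2) • (P.Lmat T Srho k *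
    (Srho k + P.SigQ T Srho k - P.Emat T Srho k * P.Sigx T Srho k * (P.Emat T Srho k)ᵀ) *
    P.Lmat T Srho k)

/-- The alternating-optimization update map `𝒯` on `T`-tuples of prior covariances:
`𝒯(σ)_k = Σ_{π_k} + P_k Σ_{x_k} P_kᵀ`. -/
noncomputable def Tmap (σ : Fin T → Matrix (Fin m) (Fin m) ℝ) :
    Fin T → Matrix (Fin m) (Fin m) ℝ :=
  fun k =>
    P.SigPi T (extT T σ) k +
      P.Pgain T (extT T σ) k * P.Sigx T (extT T σ) k * (P.Pgain T (extT T σ) k)ᵀ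

/-- The objective `J` as a function of the prior means, for fixed prior covariances:
`J(μ) = (1/2)( r_0ᵀ Π_0 r_0 + Σ_k μ_{ρ_k}ᵀ Θ_k μ_{ρ_k} )`. -/
noncomputable def Jmean (Srho : ℕ → Matrix (Fin m) (Fin m) ℝ) (μ : Fin T → Fin m → ℝ) : ℝ :=
  (1 / 2) *
    (P.rvec T Srho (extV T μ) 0 ⬝ᵥ (P.Ric T Srho 0).mulVec (P.rvec T Srho (extV T μ) 0) +
      ∑ k : Fin T, μ k ⬝ᵥ (P.Theta T Srho k).mulVec (μ k))

end LQData

open Matrix Filter Topology LQData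


variable {m : ℕ}

lemma psd_trans {M : Matrix (Fin m) (Fin m) ℝ} (h : M.PosSemidef) : Mᵀ = M := by
  have := h.isHermitian
  rwa [Matrix.IsHermitian, Matrix.conjTranspose_eq_transpose_of_trivial] at this

lemma psd_conj {p q : ℕ} {M : Matrix (Fin p) (Fin p) ℝ} (h : M.PosSemidef)
    (B : Matrix (Fin p) (Fin q) ℝ) : (Bᵀ * M * B).PosSemidef := by
  have := h.conjTranspose_mul_mul_same B
  rwa [Matrix.conjTranspose_eq_transpose_of_trivial] at this

lemma psd_mul_self {S : Matrix (Fin m) (Fin m) ℝ} (h : Sᵀ = S) : (S * S).PosSemidef := by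
  have := Matrix.posSemidef_conjTranspose_mul_self S
  rwa [Matrix.conjTranspose_eq_transpose_of_trivial, h] at this

lemma woodbury_psd {C S : Matrix (Fin m) (Fin m) ℝ} (hC : C.PosDef) (hS : Sᵀ = S) :
    (C⁻¹ - S * (1 + S * C * S)⁻¹ * S).PosSemidef := by
  have hCs : Cᵀ = C := psd_trans hC.posSemidef
  have hSCS : (S * C * S).PosSemidef := by
    have := psd_conj hC.posSemidef S
    rwa [hS] at this
  have hMpd : (1 + S * C * S).PosDef := Matrix.PosDef.add_posSemidef Matrix.PosDef.one hSCS
  set M := 1 + S * C * S with hMdef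
  have hMdet : IsUnit M.det := hMpd.det_pos.ne'.isUnit
  have hCdet : IsUnit C.det := hC.det_pos.ne'.isUnit
  have hMi : M * M⁻¹ = 1 := Matrix.mul_nonsing_inv M hMdet
  have hCi : C * C⁻¹ = 1 := Matrix.mul_nonsing_inv C hCdet
  have hiC : C⁻¹ * C = 1 := Matrix.nonsing_inv_mul C hCdet
  have hWpd : (S * S + C⁻¹).PosDef :=
    Matrix.PosDef.posSemidef_add (psd_mul_self hS) hC.inv
  have expand : S * (S * (C * (S * (M⁻¹ * (S * C))))) + S * (M⁻¹ * (S * C))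
      = S * (S * C) := by
    have e1 : S * (S * (C * (S * (M⁻¹ * (S * C))))) + S * (M⁻¹ * (S * C))
        = S * ((S * C * S + 1) * (M⁻¹ * (S * C))) := by
      simp only [Matrix.add_mul, Matrix.mul_add, Matrix.mul_assoc, Matrix.one_mul]
    have e2 : (S * C * S + 1 : Matrix (Fin m) (Fin m) ℝ) = M := by rw [hMdef]; abel
    rw [e1, e2, ← Matrix.mul_assoc M, hMi, Matrix.one_mul]
  have key : (S * S + C⁻¹) * (C - C * (S * (M⁻¹ * (S * C)))) = 1 := by
    have h3 : C⁻¹ * (C * (S * (M⁻¹ * (S * C)))) = S * (M⁻¹ * (S * C)) := by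
      rw [← Matrix.mul_assoc, hiC, Matrix.one_mul]
    rw [Matrix.add_mul, Matrix.mul_sub, Matrix.mul_sub, hiC, h3]
    have e4 : S * S * C - S * S * (C * (S * (M⁻¹ * (S * C)))) + (1 - S * (M⁻¹ * (S * C)))
        = S * (S * C) + 1 - (S * (S * (C * (S * (M⁻¹ * (S * C))))) + S * (M⁻¹ * (S * C))) := by
      simp only [Matrix.mul_assoc]; abel
    rw [e4, expand]; abel
  have hY : (S * S + C⁻¹)⁻¹ = C - C * (S * (M⁻¹ * (S * C))) := Matrix.inv_eq_right_inv key
  have hYpsd : (C - C * (S * (M⁻¹ * (S * C)))).PosSemidef := by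
    rw [← hY]; exact hWpd.inv.posSemidef
  have hCinvS : (C⁻¹)ᵀ = C⁻¹ := psd_trans hC.inv.posSemidef
  have final : C⁻¹ - S * M⁻¹ * S = (C⁻¹)ᵀ * (C - C * (S * (M⁻¹ * (S * C)))) * C⁻¹ := by
    have p1 : C⁻¹ * C * C⁻¹ = C⁻¹ := by rw [hiC, Matrix.one_mul]
    have p2 : C⁻¹ * (C * (S * (M⁻¹ * (S * C)))) * C⁻¹ = S * M⁻¹ * S := by
      rw [← Matrix.mul_assoc C⁻¹ C, hiC, Matrix.one_mul]
      simp only [Matrix.mul_assoc, hCi, Matrix.mul_one]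
    rw [hCinvS, Matrix.mul_sub, Matrix.sub_mul, p1, p2]
  rw [show C⁻¹ - S * (1 + S * C * S)⁻¹ * S = C⁻¹ - S * M⁻¹ * S from rfl, final]
  exact psd_conj hYpsd C⁻¹

lemma psd_smul {p : ℕ} {M : Matrix (Fin p) (Fin p) ℝ} (h : M.PosSemidef) {c : ℝ} (hc : 0 ≤ c) :
    (c • M).PosSemidef := by
  exact h.smul hc

lemma pd_smul {p : ℕ} {M : Matrix (Fin p) (Fin p) ℝ} (h : M.PosDef) {c : ℝ} (hc : 0 < c) :
    (c • M).PosDef := by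
  exact h.smul hc

lemma cos_identity {n m : ℕ} (A : Matrix (Fin n) (Fin n) ℝ) (B : Matrix (Fin n) (Fin m) ℝ)
    {Q : Matrix (Fin n) (Fin n) ℝ} {R : Matrix (Fin m) (Fin m) ℝ} (hQ : Qᵀ = Q) (hRs : Rᵀ = R) (hM : (R + Bᵀ * Q * B).PosDef)
    (K : Matrix (Fin m) (Fin n) ℝ) :
    (A + B * K)ᵀ * Q * (A + B * K) + Kᵀ * R * K =
      (Aᵀ * Q * A - Aᵀ * Q * B * (R + Bᵀ * Q * B)⁻¹ * Bᵀ * Q * A) +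
        (K + (R + Bᵀ * Q * B)⁻¹ * (Bᵀ * Q * A))ᵀ * (R + Bᵀ * Q * B) *
          (K + (R + Bᵀ * Q * B)⁻¹ * (Bᵀ * Q * A)) := by
  set M := R + Bᵀ * Q * B with hMdef
  have hdet : IsUnit M.det := hM.det_pos.ne'.isUnit
  have hMi : M * M⁻¹ = 1 := Matrix.mul_nonsing_inv M hdet
  have hiM : M⁻¹ * M = 1 := Matrix.nonsing_inv_mul M hdet
  have hMs : Mᵀ = M := by
    rw [hMdef, Matrix.transpose_add, hRs, Matrix.transpose_mul, Matrix.transpose_mul,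
      Matrix.transpose_transpose, hQ, Matrix.mul_assoc]
  have hMis : (M⁻¹)ᵀ = M⁻¹ := by rw [Matrix.transpose_nonsing_inv, hMs]
  have ht1 : (A + B * K)ᵀ = Aᵀ + Kᵀ * Bᵀ := by
    rw [Matrix.transpose_add, Matrix.transpose_mul]
  have ht2 : (K + M⁻¹ * (Bᵀ * Q * A))ᵀ = Kᵀ + Aᵀ * Q * B * M⁻¹ := by
    rw [Matrix.transpose_add, Matrix.transpose_mul, hMis, Matrix.transpose_mul,
      Matrix.transpose_mul, Matrix.transpose_transpose, hQ]
    simp [Matrix.mul_assoc]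
  rw [ht1, ht2]
  have c1 : ∀ X : Matrix (Fin m) (Fin n) ℝ, M * (M⁻¹ * X) = X := fun X => by
    rw [← Matrix.mul_assoc, hMi, Matrix.one_mul]
  have c2 : ∀ X : Matrix (Fin m) (Fin n) ℝ, M⁻¹ * (M * X) = X := fun X => by
    rw [← Matrix.mul_assoc, hiM, Matrix.one_mul]
  simp only [Matrix.add_mul, Matrix.mul_add, Matrix.mul_assoc, c1, c2]
  rw [hMdef]
  simp only [Matrix.add_mul, Matrix.mul_add, Matrix.mul_assoc]
  abel

lemma riccati_step {n m : ℕ} (A : Matrix (Fin n) (Fin n) ℝ) (B : Matrix (Fin n) (Fin m) ℝ)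
    {R : Matrix (Fin m) (Fin m) ℝ} (hRpd : R.PosDef)
    {S : Matrix (Fin m) (Fin m) ℝ} (hSs : Sᵀ = S)
    {ε : ℝ} (hε : 0 < ε)
    {Pi1 Pi2 Pi3 : Matrix (Fin n) (Fin n) ℝ} (hD1 : (Pi3 - Pi1).PosSemidef)
    (hD2 : (Pi1 - Pi2).PosSemidef) (hP3 : Pi2.PosSemidef) :
    (Aᵀ * Pi3 * A -
        (Aᵀ * Pi1 * A - (1 / ε) • (Aᵀ * Pi1 * B * S *
          (1 + S * ((1 / ε) • (R + Bᵀ * Pi1 * B)) * S)⁻¹ * S * Bᵀ * Pi1 * A))).PosSemidef ∧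
      ((Aᵀ * Pi1 * A - (1 / ε) • (Aᵀ * Pi1 * B * S *
          (1 + S * ((1 / ε) • (R + Bᵀ * Pi1 * B)) * S)⁻¹ * S * Bᵀ * Pi1 * A)) -
        (Aᵀ * Pi2 * A -
          Aᵀ * Pi2 * B * (R + Bᵀ * Pi2 * B)⁻¹ * Bᵀ * Pi2 * A)).PosSemidef ∧
      (Aᵀ * Pi2 * A - Aᵀ * Pi2 * B * (R + Bᵀ * Pi2 * B)⁻¹ * Bᵀ * Pi2 * A).PosSemidef := by
  have hPi1 : Pi1.PosSemidef := by have h := hD2.add hP3; rwa [sub_add_cancel] at h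
  have hPi1s : Pi1ᵀ = Pi1 := psd_trans hPi1
  have hPi2s : Pi2ᵀ = Pi2 := psd_trans hP3
  have hRs : Rᵀ = R := psd_trans hRpd.posSemidef
  have hεinv : (0:ℝ) < 1 / ε := by positivity
  have hM1 : (R + Bᵀ * Pi1 * B).PosDef := Matrix.PosDef.add_posSemidef hRpd (psd_conj hPi1 B)
  have hM2 : (R + Bᵀ * Pi2 * B).PosDef := Matrix.PosDef.add_posSemidef hRpd (psd_conj hP3 B)
  have hCpd : ((1 / ε) • (R + Bᵀ * Pi1 * B)).PosDef := pd_smul hM1 hεinv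
  have hSCS : (S * ((1 / ε) • (R + Bᵀ * Pi1 * B)) * S).PosSemidef := by
    have := psd_conj hCpd.posSemidef S; rwa [hSs] at this
  have hNpd : (1 + S * ((1 / ε) • (R + Bᵀ * Pi1 * B)) * S).PosDef :=
    Matrix.PosDef.add_posSemidef Matrix.PosDef.one hSCS
  have hCi : ((1 / ε) • (R + Bᵀ * Pi1 * B)) * ((1 / ε) • (R + Bᵀ * Pi1 * B))⁻¹ = 1 :=
    Matrix.mul_nonsing_inv _ hCpd.det_pos.ne'.isUnit
  have hM1inv : (R + Bᵀ * Pi1 * B)⁻¹ = (1 / ε) • ((1 / ε) • (R + Bᵀ * Pi1 * B))⁻¹ := by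
    apply Matrix.inv_eq_right_inv
    have hfold : R + Bᵀ * Pi1 * B = ε • ((1 / ε) • (R + Bᵀ * Pi1 * B)) := by
      rw [smul_smul, mul_one_div_cancel hε.ne', one_smul]
    rw [Matrix.mul_smul]
    nth_rewrite 1 [hfold]
    rw [Matrix.smul_mul, hCi, smul_smul, one_div_mul_cancel hε.ne', one_smul]
  have hD : ((R + Bᵀ * Pi1 * B)⁻¹ -
      (1 / ε) • (S * (1 + S * ((1 / ε) • (R + Bᵀ * Pi1 * B)) * S)⁻¹ * S)).PosSemidef := by
    rw [hM1inv, ← smul_sub]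
    exact psd_smul (woodbury_psd hCpd hSs) hεinv.le
  -- abbreviations (notation only)
  -- Third component
  have hz2 : -((R + Bᵀ * Pi2 * B)⁻¹ * (Bᵀ * Pi2 * A)) +
      (R + Bᵀ * Pi2 * B)⁻¹ * (Bᵀ * Pi2 * A) = 0 := neg_add_cancel _
  have hcos2 := cos_identity A B hPi2s hRs hM2 (-((R + Bᵀ * Pi2 * B)⁻¹ * (Bᵀ * Pi2 * A)))
  rw [hz2] at hcos2
  simp only [Matrix.transpose_zero, Matrix.zero_mul, Matrix.mul_zero, add_zero] at hcos2
  have third : (Aᵀ * Pi2 * A -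
      Aᵀ * Pi2 * B * (R + Bᵀ * Pi2 * B)⁻¹ * Bᵀ * Pi2 * A).PosSemidef := by
    rw [← hcos2]
    exact (psd_conj hP3 _).add (psd_conj hRpd.posSemidef _)
  -- First component
  have e : Aᵀ * Pi1 * B * S * (1 + S * ((1 / ε) • (R + Bᵀ * Pi1 * B)) * S)⁻¹ * S * Bᵀ * Pi1 * A
      = (S * Bᵀ * Pi1 * A)ᵀ * (1 + S * ((1 / ε) • (R + Bᵀ * Pi1 * B)) * S)⁻¹ *
        (S * Bᵀ * Pi1 * A) := by
    simp only [Matrix.transpose_mul, Matrix.transpose_transpose, hPi1s, hSs, Matrix.mul_assoc]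
  have first : (Aᵀ * Pi3 * A -
      (Aᵀ * Pi1 * A - (1 / ε) • (Aᵀ * Pi1 * B * S *
        (1 + S * ((1 / ε) • (R + Bᵀ * Pi1 * B)) * S)⁻¹ * S * Bᵀ * Pi1 * A))).PosSemidef := by
    have g1eq : Aᵀ * Pi3 * A -
        (Aᵀ * Pi1 * A - (1 / ε) • (Aᵀ * Pi1 * B * S *
          (1 + S * ((1 / ε) • (R + Bᵀ * Pi1 * B)) * S)⁻¹ * S * Bᵀ * Pi1 * A))
        = Aᵀ * (Pi3 - Pi1) * A + (1 / ε) • ((S * Bᵀ * Pi1 * A)ᵀ *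
            (1 + S * ((1 / ε) • (R + Bᵀ * Pi1 * B)) * S)⁻¹ * (S * Bᵀ * Pi1 * A)) := by
      rw [← e, Matrix.mul_sub, Matrix.sub_mul]; abel
    rw [g1eq]
    exact (psd_conj hD1 A).add (psd_smul (psd_conj hNpd.inv.posSemidef _) hεinv.le)
  -- Second component
  have hz1 : -((R + Bᵀ * Pi1 * B)⁻¹ * (Bᵀ * Pi1 * A)) +
      (R + Bᵀ * Pi1 * B)⁻¹ * (Bᵀ * Pi1 * A) = 0 := neg_add_cancel _
  have hcos1 := cos_identity A B hPi1s hRs hM1 (-((R + Bᵀ * Pi1 * B)⁻¹ * (Bᵀ * Pi1 * A)))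
  rw [hz1] at hcos1
  simp only [Matrix.transpose_zero, Matrix.zero_mul, Matrix.mul_zero, add_zero] at hcos1
  have hcos2b := cos_identity A B hPi2s hRs hM2 (-((R + Bᵀ * Pi1 * B)⁻¹ * (Bᵀ * Pi1 * A)))
  have second : ((Aᵀ * Pi1 * A - (1 / ε) • (Aᵀ * Pi1 * B * S *
        (1 + S * ((1 / ε) • (R + Bᵀ * Pi1 * B)) * S)⁻¹ * S * Bᵀ * Pi1 * A)) -
      (Aᵀ * Pi2 * A - Aᵀ * Pi2 * B * (R + Bᵀ * Pi2 * B)⁻¹ * Bᵀ * Pi2 * A)).PosSemidef := by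
    have t1 : (Bᵀ * Pi1 * A)ᵀ * ((R + Bᵀ * Pi1 * B)⁻¹ -
          (1 / ε) • (S * (1 + S * ((1 / ε) • (R + Bᵀ * Pi1 * B)) * S)⁻¹ * S)) * (Bᵀ * Pi1 * A)
        = Aᵀ * Pi1 * B * (R + Bᵀ * Pi1 * B)⁻¹ * Bᵀ * Pi1 * A -
          (1 / ε) • (Aᵀ * Pi1 * B * S *
            (1 + S * ((1 / ε) • (R + Bᵀ * Pi1 * B)) * S)⁻¹ * S * Bᵀ * Pi1 * A) := by
      rw [Matrix.mul_sub, Matrix.sub_mul, Matrix.mul_smul, Matrix.smul_mul]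
      congr 1
      · simp only [Matrix.transpose_mul, Matrix.transpose_transpose, hPi1s, Matrix.mul_assoc]
      · congr 1
        simp only [Matrix.transpose_mul, Matrix.transpose_transpose, hPi1s, hSs,
          Matrix.mul_assoc]
    have t2 : (A + B * -((R + Bᵀ * Pi1 * B)⁻¹ * (Bᵀ * Pi1 * A)))ᵀ * (Pi1 - Pi2) *
          (A + B * -((R + Bᵀ * Pi1 * B)⁻¹ * (Bᵀ * Pi1 * A)))
        = (A + B * -((R + Bᵀ * Pi1 * B)⁻¹ * (Bᵀ * Pi1 * A)))ᵀ * Pi1 *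
            (A + B * -((R + Bᵀ * Pi1 * B)⁻¹ * (Bᵀ * Pi1 * A))) -
          (A + B * -((R + Bᵀ * Pi1 * B)⁻¹ * (Bᵀ * Pi1 * A)))ᵀ * Pi2 *
            (A + B * -((R + Bᵀ * Pi1 * B)⁻¹ * (Bᵀ * Pi1 * A))) := by
      rw [Matrix.mul_sub, Matrix.sub_mul]
    have hric1 := eq_sub_of_add_eq hcos1
    have hric2 := eq_sub_of_add_eq hcos2b.symm
    have g2eq : (Aᵀ * Pi1 * A - (1 / ε) • (Aᵀ * Pi1 * B * S *
          (1 + S * ((1 / ε) • (R + Bᵀ * Pi1 * B)) * S)⁻¹ * S * Bᵀ * Pi1 * A)) -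
        (Aᵀ * Pi2 * A - Aᵀ * Pi2 * B * (R + Bᵀ * Pi2 * B)⁻¹ * Bᵀ * Pi2 * A)
        = (A + B * -((R + Bᵀ * Pi1 * B)⁻¹ * (Bᵀ * Pi1 * A)))ᵀ * (Pi1 - Pi2) *
            (A + B * -((R + Bᵀ * Pi1 * B)⁻¹ * (Bᵀ * Pi1 * A))) +
          (Bᵀ * Pi1 * A)ᵀ * ((R + Bᵀ * Pi1 * B)⁻¹ -
            (1 / ε) • (S * (1 + S * ((1 / ε) • (R + Bᵀ * Pi1 * B)) * S)⁻¹ * S)) *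
            (Bᵀ * Pi1 * A) +
          (-((R + Bᵀ * Pi1 * B)⁻¹ * (Bᵀ * Pi1 * A)) +
              (R + Bᵀ * Pi2 * B)⁻¹ * (Bᵀ * Pi2 * A))ᵀ * (R + Bᵀ * Pi2 * B) *
            (-((R + Bᵀ * Pi1 * B)⁻¹ * (Bᵀ * Pi1 * A)) +
              (R + Bᵀ * Pi2 * B)⁻¹ * (Bᵀ * Pi2 * A)) := by
      rw [t2, t1, hric2, hric1]
      abel
    rw [g2eq]
    exact ((psd_conj hD2 _).add (psd_conj hD _)).add (psd_conj hM2.posSemidef _)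
  exact ⟨first, second, third⟩
lemma psd_zero {d : ℕ} : (0 : Matrix (Fin d) (Fin d) ℝ).PosSemidef := by
  refine ⟨?_, fun x => ?_⟩ <;> simp [Matrix.IsHermitian]

lemma msqrt_psd {d : ℕ} (X : Matrix (Fin d) (Fin d) ℝ) : (msqrt X).PosSemidef := by
  unfold msqrt
  split
  · rw [Matrix.star_eq_conjTranspose]
    exact (Matrix.PosSemidef.diagonal (fun i => by simp [Real.sqrt_nonneg])).mul_mul_conjTranspose_same _
  · exact psd_zero

lemma psd_zero' {d : ℕ} : (0 : Matrix (Fin d) (Fin d) ℝ).PosSemidef := psd_zero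

namespace LQData
variable {n m : ℕ} (P : LQData n m) (T : ℕ) (Srho : ℕ → Matrix (Fin m) (Fin m) ℝ)

lemma Ric_stop (k : ℕ) (hk : T ≤ k) : P.Ric T Srho k = P.F := by
  rw [Ric]; simp only [dif_pos hk]

lemma Ric_succ (k : ℕ) (hk : k < T) :
    P.Ric T Srho k = (P.A k)ᵀ * P.Ric T Srho (k+1) * P.A k -
      (1 / P.ε) • ((P.A k)ᵀ * P.Ric T Srho (k+1) * P.B k * msqrt (Srho k) *
        (1 + msqrt (Srho k) * ((1 / P.ε) • (P.R k + (P.B k)ᵀ * P.Ric T Srho (k+1) * P.B k)) *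
          msqrt (Srho k))⁻¹ * msqrt (Srho k) * (P.B k)ᵀ * P.Ric T Srho (k+1) * P.A k) := by
  rw [Ric]; simp only [dif_neg (not_le.mpr hk)]

lemma RicLQR_stop (k : ℕ) (hk : T ≤ k) : P.RicLQR T k = P.F := by
  rw [RicLQR]; simp only [dif_pos hk]

lemma RicLQR_succ (k : ℕ) (hk : k < T) :
    P.RicLQR T k = (P.A k)ᵀ * P.RicLQR T (k+1) * P.A k -
      (P.A k)ᵀ * P.RicLQR T (k+1) * P.B k *
        (P.R k + (P.B k)ᵀ * P.RicLQR T (k+1) * P.B k)⁻¹ * (P.B k)ᵀ * P.RicLQR T (k+1) *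
          P.A k := by
  rw [RicLQR]; simp only [dif_neg (not_le.mpr hk)]

lemma RicHat_stop (k : ℕ) (hk : T ≤ k) : P.RicHat T k = P.F := by
  rw [RicHat]; simp only [dif_pos hk]

lemma RicHat_succ (k : ℕ) (hk : k < T) :
    P.RicHat T k = (P.A k)ᵀ * P.RicHat T (k+1) * P.A k := by
  rw [RicHat]; simp only [dif_neg (not_le.mpr hk)]

end LQData

theorem riccati_loewner_bounds {n m : ℕ} (hn : 1 ≤ n) (hm : 1 ≤ m) (T : ℕ) (hT : 1 ≤ T)
    (P : LQData n m) (hε : 0 < P.ε)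
    (hR : ∀ k < T, (P.R k).PosDef) (hSw : ∀ k < T, (P.Sw k).PosDef)
    (hF : P.F.PosDef) (hSini : P.Sini.PosDef)
    (Srho : ℕ → Matrix (Fin m) (Fin m) ℝ) (hSrho : ∀ k < T, (Srho k).PosSemidef) :
    ∀ k ≤ T, (P.RicHat T k - P.Ric T Srho k).PosSemidef ∧
      (P.Ric T Srho k - P.RicLQR T k).PosSemidef ∧
      (P.RicLQR T k).PosSemidef := by
  have key : ∀ d k, k + d = T →
      (P.RicHat T k - P.Ric T Srho k).PosSemidef ∧
        (P.Ric T Srho k - P.RicLQR T k).PosSemidef ∧ (P.RicLQR T k).PosSemidef := by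
    intro d
    induction d with
    | zero =>
      intro k hkd
      have hk : T ≤ k := by omega
      refine ⟨?_, ?_, ?_⟩
      · rw [P.RicHat_stop T k hk, P.Ric_stop T Srho k hk, sub_self]; exact psd_zero
      · rw [P.Ric_stop T Srho k hk, P.RicLQR_stop T k hk, sub_self]; exact psd_zero
      · rw [P.RicLQR_stop T k hk]; exact hF.posSemidef
    | succ d ih =>
      intro k hkd
      have hk : k < T := by omega
      obtain ⟨hD1, hD2, hP3⟩ := ih (k+1) (by omega)
      have hstep := riccati_step (P.A k) (P.B k) (hR k hk)
        (psd_trans (msqrt_psd (Srho k))) hε hD1 hD2 hP3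
      rw [P.RicHat_succ T k hk, P.Ric_succ T Srho k hk, P.RicLQR_succ T k hk]
      exact hstep
  intro k hk
  exact key (T - k) k (by omega)
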